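/- If only Σ varies (μ' = 0, λ' = 0) in Σ̃ = [[Σ + λ μ μ^T, λμ],[λμ^T, λ]], then tr(Σ̃' Σ̃^{-1} Σ̃' Σ̃^{-1}) = tr(Σ' Σ^{-1} Σ' Σ^{-1}). -/

import Mathlib

open Matrix

lemma my_trace_fromBlocks {m n : Type*} [Fintype m] [Fintype n] [DecidableEq m] [DecidableEq n]
    (A : Matrix m m ℝ) (B : Matrix m n ℝ) (C : Matrix n m ℝ) (Dm : Matrix n n ℝ) :
    (Matrix.fromBlocks A B C Dm).trace = A.trace + Dm.trace := by
  simp [Matrix.trace, Matrix.diag, Fintype.sum_sum_type]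

/-- For the curve `t ↦ Σ̃(t) = [[Σ(t) + λ μ μᵀ, λμ], [λμᵀ, λ]]` with `μ` and `λ`
fixed and only `Σ` varying, `tr(Σ̃' Σ̃⁻¹ Σ̃' Σ̃⁻¹) = tr(Σ' Σ⁻¹ Σ' Σ⁻¹)`
(derivatives taken entrywise). -/
theorem block_metric_covariance_direction
    (M : ℕ) (Sc : ℝ → Matrix (Fin M) (Fin M) ℝ)
    (dS : Matrix (Fin M) (Fin M) ℝ) (t₀ : ℝ)
    (hSc : ∀ t, (Sc t).PosDef)
    (hdS : ∀ i j, HasDerivAt (fun t => Sc t i j) (dS i j) t₀)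
    (μ : Fin M → ℝ) (l : ℝ) (hl : 0 < l)
    (St : ℝ → Matrix (Fin M ⊕ Fin 1) (Fin M ⊕ Fin 1) ℝ)
    (hSt : ∀ t, St t =
      Matrix.fromBlocks (Sc t + l • (Matrix.replicateCol (Fin 1) μ * Matrix.replicateRow (Fin 1) μ))
        (l • Matrix.replicateCol (Fin 1) μ) (l • Matrix.replicateRow (Fin 1) μ)
        (l • (1 : Matrix (Fin 1) (Fin 1) ℝ)))
    (D : Matrix (Fin M ⊕ Fin 1) (Fin M ⊕ Fin 1) ℝ)
    (hD : ∀ i j, HasDerivAt (fun t => St t i j) (D i j) t₀) :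
    (D * (St t₀)⁻¹ * D * (St t₀)⁻¹).trace
      = (dS * (Sc t₀)⁻¹ * dS * (Sc t₀)⁻¹).trace := by
  set S := Sc t₀ with hS
  have hdet : S.det ≠ 0 := (hSc t₀).det_pos.ne'
  have hinv : S * S⁻¹ = 1 := Matrix.mul_nonsing_inv S (Ne.isUnit hdet)
  have hinv' : S⁻¹ * S = 1 := Matrix.nonsing_inv_mul S (Ne.isUnit hdet)
  -- D is the block matrix [[dS, 0], [0, 0]]
  have hDblock : D = Matrix.fromBlocks dS 0 0 0 := by
    funext i j
    have h1 := hD i j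
    have h2 : (fun t => St t i j) = fun t => (Matrix.fromBlocks
        (Sc t + l • (Matrix.replicateCol (Fin 1) μ * Matrix.replicateRow (Fin 1) μ))
        (l • Matrix.replicateCol (Fin 1) μ) (l • Matrix.replicateRow (Fin 1) μ)
        (l • (1 : Matrix (Fin 1) (Fin 1) ℝ))) i j := by
      funext t; rw [hSt t]
    rw [h2] at h1
    cases i with
    | inl i =>
      cases j with
      | inl j =>
        simp only [Matrix.fromBlocks_apply₁₁, Matrix.add_apply, Matrix.smul_apply,
          smul_eq_mul] at h1
        have h3 : HasDerivAt (fun t => Sc t i j + l * (Matrix.replicateCol (Fin 1) μ * Matrix.replicateRow (Fin 1) μ) i j)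
            (dS i j) t₀ := (hdS i j).add_const _
        have := h3.unique h1
        simp [Matrix.fromBlocks_apply₁₁, this]
      | inr j =>
        simp only [Matrix.fromBlocks_apply₁₂] at h1
        have := (hasDerivAt_const t₀ ((l • Matrix.replicateCol (Fin 1) μ) i j)).unique h1
        simp [Matrix.fromBlocks_apply₁₂, ← this]
    | inr i =>
      cases j with
      | inl j =>
        simp only [Matrix.fromBlocks_apply₂₁] at h1
        have := (hasDerivAt_const t₀ ((l • Matrix.replicateRow (Fin 1) μ) i j)).unique h1
        simp [Matrix.fromBlocks_apply₂₁, ← this]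
      | inr j =>
        simp only [Matrix.fromBlocks_apply₂₂] at h1
        have := (hasDerivAt_const t₀ ((l • (1 : Matrix (Fin 1) (Fin 1) ℝ)) i j)).unique h1
        simp [Matrix.fromBlocks_apply₂₂, ← this]
  -- explicit inverse of St t₀
  set C := Matrix.replicateCol (Fin 1) μ with hC
  set R := Matrix.replicateRow (Fin 1) μ with hR
  set X := Matrix.fromBlocks S⁻¹ (-(S⁻¹ * C)) (-(R * S⁻¹))
      (l⁻¹ • (1 : Matrix (Fin 1) (Fin 1) ℝ) + R * S⁻¹ * C) with hX
  have hSS : ∀ (B : Matrix (Fin M) (Fin 1) ℝ), S * (S⁻¹ * B) = B := fun B => by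
    rw [← Matrix.mul_assoc, hinv, Matrix.one_mul]
  have hTL : (S + l • (C * R)) * S⁻¹ + l • C * -(R * S⁻¹) = 1 := by
    rw [Matrix.add_mul, hinv, Matrix.smul_mul, Matrix.mul_neg, Matrix.smul_mul,
      Matrix.mul_assoc]
    abel
  have hTR : (S + l • (C * R)) * -(S⁻¹ * C) + l • C *
      (l⁻¹ • (1 : Matrix (Fin 1) (Fin 1) ℝ) + R * S⁻¹ * C) = 0 := by
    rw [Matrix.mul_neg, Matrix.add_mul, hSS]
    simp only [Matrix.mul_add, Matrix.mul_smul, Matrix.smul_mul,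
      Matrix.mul_one, smul_smul, inv_mul_cancel₀ hl.ne', one_smul, Matrix.mul_assoc]
    abel
  have hBL : l • R * S⁻¹ + l • (1 : Matrix (Fin 1) (Fin 1) ℝ) * -(R * S⁻¹) = 0 := by
    rw [Matrix.smul_mul, Matrix.mul_neg, Matrix.smul_mul, Matrix.one_mul]
    abel
  have hBR : l • R * -(S⁻¹ * C) + l • (1 : Matrix (Fin 1) (Fin 1) ℝ) *
      (l⁻¹ • (1 : Matrix (Fin 1) (Fin 1) ℝ) + R * S⁻¹ * C) = 1 := by
    simp only [Matrix.mul_neg, Matrix.smul_mul, Matrix.mul_add, Matrix.mul_smul,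
      Matrix.mul_one, Matrix.one_mul, smul_smul, inv_mul_cancel₀ hl.ne', one_smul,
      Matrix.mul_assoc]
    abel
  have hmul : St t₀ * X = 1 := by
    rw [hSt t₀, hX, Matrix.fromBlocks_multiply]
    have hS' : Sc t₀ = S := rfl
    rw [hS', hTL, hTR, hBL, hBR, Matrix.fromBlocks_one]
  have hinvSt : (St t₀)⁻¹ = X := Matrix.inv_eq_right_inv hmul
  rw [hinvSt, hDblock, hX]
  rw [Matrix.fromBlocks_multiply, Matrix.fromBlocks_multiply, Matrix.fromBlocks_multiply]
  simp only [Matrix.zero_mul, Matrix.mul_zero, add_zero, zero_add, Matrix.mul_neg]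
  rw [my_trace_fromBlocks]
  simp [Matrix.mul_assoc]
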